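/- arXiv:0705.1159 — 5 statements merged into one kernel-verified Lean document; each statement's English description precedes it below -/
import Mathlib

section
/- With the notation of the mixing construction: if π₁ is a stationary distribution of P₁ and π₂ is a stationary distribution of P₂, and 0 < μ₁₂, μ₂₁ < 1, then the vector π' = (α π₁, (1-α) π₂) with α = μ₂₁/(μ₁₂+μ₂₁) is a stationary distribution of the mixed matrix P' = [[(1-μ₁₂)P₁, μ₁₂P̄₂],[μ₂₁P̄₁, (1-μ₂₁)P₂]]. -/
open scoped BigOperators

/-- A matrix is row-stochastic if its entries are nonnegative and each row sums to 1. -/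
def RowStochastic {m n : Type*} [Fintype n] (M : Matrix m n ℝ) : Prop :=
  (∀ i j, 0 ≤ M i j) ∧ ∀ i, ∑ j, M i j = 1

/-- A probability vector has nonnegative entries summing to 1. -/
def ProbVec {n : Type*} [Fintype n] (π : n → ℝ) : Prop :=
  (∀ i, 0 ≤ π i) ∧ ∑ i, π i = 1

/-- `π` is a stationary distribution of the row-stochastic matrix `P`: `π P = π`. -/
def Stationary {n : Type*} [Fintype n] (π : n → ℝ) (P : Matrix n n ℝ) : Prop :=
  ProbVec π ∧ ∀ j, ∑ i, π i * P i j = π j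

/-- `π' = (α π₁, (1-α) π₂)` with `α = μ₂₁/(μ₁₂+μ₂₁)` is a stationary
distribution of the mixed matrix `P'`. -/
theorem mixed_matrix_stationary {k₁ k₂ : ℕ}
    (P₁ : Matrix (Fin k₁) (Fin k₁) ℝ) (P₂ : Matrix (Fin k₂) (Fin k₂) ℝ)
    (hP₁ : RowStochastic P₁) (hP₂ : RowStochastic P₂)
    (π₁ : Fin k₁ → ℝ) (π₂ : Fin k₂ → ℝ)
    (hπ₁ : Stationary π₁ P₁) (hπ₂ : Stationary π₂ P₂)
    (μ₁₂ μ₂₁ : ℝ) (hμ₁₂ : 0 < μ₁₂) (hμ₁₂' : μ₁₂ < 1) (hμ₂₁ : 0 < μ₂₁) (hμ₂₁' : μ₂₁ < 1) :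
    Stationary
      (Sum.elim (fun i => (μ₂₁ / (μ₁₂ + μ₂₁)) * π₁ i)
                (fun i => (1 - μ₂₁ / (μ₁₂ + μ₂₁)) * π₂ i))
      (Matrix.fromBlocks
        ((1 - μ₁₂) • P₁) (μ₁₂ • Matrix.of fun (_ : Fin k₁) (j : Fin k₂) => π₂ j)
        (μ₂₁ • Matrix.of fun (_ : Fin k₂) (j : Fin k₁) => π₁ j) ((1 - μ₂₁) • P₂)) := by
  obtain ⟨⟨h1n, h1s⟩, h1st⟩ := hπ₁
  obtain ⟨⟨h2n, h2s⟩, h2st⟩ := hπ₂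
  have hs : 0 < μ₁₂ + μ₂₁ := by linarith
  have hα0 : 0 ≤ μ₂₁ / (μ₁₂ + μ₂₁) := by positivity
  have hα1 : μ₂₁ / (μ₁₂ + μ₂₁) ≤ 1 := by rw [div_le_one hs]; linarith
  have key : (1 - μ₂₁ / (μ₁₂ + μ₂₁)) * μ₂₁ = (μ₂₁ / (μ₁₂ + μ₂₁)) * μ₁₂ := by
    field_simp
    ring
  refine ⟨⟨?_, ?_⟩, ?_⟩
  · rintro (i | i)
    · exact mul_nonneg hα0 (h1n i)
    · exact mul_nonneg (by linarith) (h2n i)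
  · rw [Fintype.sum_sum_type]
    simp only [Sum.elim_inl, Sum.elim_inr]
    rw [← Finset.mul_sum, ← Finset.mul_sum, h1s, h2s]
    ring
  · rintro (j | j)
    · simp only [Fintype.sum_sum_type, Sum.elim_inl, Sum.elim_inr,
        Matrix.fromBlocks_apply₁₁, Matrix.fromBlocks_apply₂₁, Matrix.smul_apply,
        Matrix.of_apply, smul_eq_mul]
      have e1 : ∑ i, μ₂₁ / (μ₁₂ + μ₂₁) * π₁ i * ((1 - μ₁₂) * P₁ i j)
          = μ₂₁ / (μ₁₂ + μ₂₁) * (1 - μ₁₂) * ∑ i, π₁ i * P₁ i j := by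
        rw [Finset.mul_sum]; exact Finset.sum_congr rfl fun i _ => by ring
      have e2 : ∑ i, (1 - μ₂₁ / (μ₁₂ + μ₂₁)) * π₂ i * (μ₂₁ * π₁ j)
          = (1 - μ₂₁ / (μ₁₂ + μ₂₁)) * μ₂₁ * π₁ j * ∑ i, π₂ i := by
        rw [Finset.mul_sum]
        exact Finset.sum_congr rfl fun i _ => by ring
      rw [e1, e2, h1st j, h2s, key]
      ring
    · simp only [Fintype.sum_sum_type, Sum.elim_inl, Sum.elim_inr,
        Matrix.fromBlocks_apply₁₂, Matrix.fromBlocks_apply₂₂, Matrix.smul_apply,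
        Matrix.of_apply, smul_eq_mul]
      have e1 : ∑ i, μ₂₁ / (μ₁₂ + μ₂₁) * π₁ i * (μ₁₂ * π₂ j)
          = μ₂₁ / (μ₁₂ + μ₂₁) * μ₁₂ * π₂ j * ∑ i, π₁ i := by
        rw [Finset.mul_sum]
        exact Finset.sum_congr rfl fun i _ => by ring
      have e2 : ∑ i, (1 - μ₂₁ / (μ₁₂ + μ₂₁)) * π₂ i * ((1 - μ₂₁) * P₂ i j)
          = (1 - μ₂₁ / (μ₁₂ + μ₂₁)) * (1 - μ₂₁) * ∑ i, π₂ i * P₂ i j := by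
        rw [Finset.mul_sum]; exact Finset.sum_congr rfl fun i _ => by ring
      rw [e1, e2, h2st j, h1s, ← key]
      ring
end

section
/- Let f and g be probability mass functions on a finite set, with g strictly positive on the support of f, and suppose ε⁻ g(y) ≤ f(y) ≤ ε⁺ g(y) for all y, where 0 < ε⁻ ≤ 1 ≤ ε⁺. Then the Shannon entropy H(f) = -Σ_y f(y) log f(y) satisfies H(f) ≤ ε⁺ H(g) - ε⁺ log ε⁻ and H(f) ≥ ε⁻ H(g) - ε⁻ log ε⁺. -/
open scoped BigOperators

/-- Shannon entropy of a PMF on a finite set (with the convention `0 log 0 = 0`,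
which holds automatically since `Real.log 0 = 0`). -/
noncomputable def pmfEntropy {Y : Type*} [Fintype Y] (f : Y → ℝ) : ℝ :=
  -∑ y, f y * Real.log (f y)

lemma entropy_key (fy gy εm εp : ℝ) (hfy : 0 ≤ fy) (hfy1 : fy ≤ 1)
    (hgy : 0 ≤ gy) (hgy1 : gy ≤ 1)
    (hεm : 0 < εm) (hεm1 : εm ≤ 1) (hεp1 : 1 ≤ εp)
    (hpos : fy ≠ 0 → 0 < gy)
    (hlow : εm * gy ≤ fy) (hhigh : fy ≤ εp * gy) :
    (-(fy * Real.log fy) ≤ -(εp * (gy * Real.log gy)) - εp * (gy * Real.log εm)) ∧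
    (-(εm * (gy * Real.log gy)) - εm * (gy * Real.log εp) ≤ -(fy * Real.log fy)) := by
  by_cases hf : fy = 0
  · have hg0 : gy = 0 := by nlinarith [hlow, hgy, hεm]
    simp [hf, hg0]
  · have hfpos : 0 < fy := lt_of_le_of_ne hfy (Ne.symm hf)
    have hgpos : 0 < gy := hpos hf
    set a := Real.log fy with ha
    set b := Real.log gy with hb
    set c := Real.log εm with hc
    set d := Real.log εp with hd
    have la : c + b ≤ a := by
      have : Real.log (εm * gy) ≤ Real.log fy := Real.log_le_log (by positivity) hlow
      rwa [Real.log_mul (ne_of_gt hεm) (ne_of_gt hgpos)] at this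
    have lb : a ≤ d + b := by
      have : Real.log fy ≤ Real.log (εp * gy) :=
        Real.log_le_log hfpos hhigh
      rwa [Real.log_mul (by linarith) (ne_of_gt hgpos)] at this
    have lf0 : a ≤ 0 := Real.log_nonpos hfy hfy1
    constructor
    · have h1 : 0 ≤ (εp * gy - fy) * (-a) := by nlinarith
      have h2 : 0 ≤ εp * gy * (a - (c + b)) := by
        have : 0 ≤ εp * gy := by positivity
        nlinarith
      nlinarith [h1, h2]
    · have h3 : 0 ≤ (fy - εm * gy) * (-a) := by nlinarith
      have h4 : 0 ≤ εm * gy * ((d + b) - a) := by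
        have : 0 ≤ εm * gy := by positivity
        nlinarith
      nlinarith [h3, h4]

/-- entropy sandwich bounds for multiplicatively-close PMFs. -/
theorem entropy_sandwich {Y : Type*} [Fintype Y]
    (f g : Y → ℝ)
    (hf0 : ∀ y, 0 ≤ f y) (hf1 : ∑ y, f y = 1)
    (hg0 : ∀ y, 0 ≤ g y) (hg1 : ∑ y, g y = 1)
    (hgpos : ∀ y, f y ≠ 0 → 0 < g y)
    (εm εp : ℝ) (hεm : 0 < εm) (hεm1 : εm ≤ 1) (hεp1 : 1 ≤ εp)
    (hlow : ∀ y, εm * g y ≤ f y) (hhigh : ∀ y, f y ≤ εp * g y) :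
    pmfEntropy f ≤ εp * pmfEntropy g - εp * Real.log εm ∧
      εm * pmfEntropy g - εm * Real.log εp ≤ pmfEntropy f := by
  have hf1' : ∀ y, f y ≤ 1 := fun y => by
    calc f y ≤ ∑ z, f z := Finset.single_le_sum (fun z _ => hf0 z) (Finset.mem_univ y)
    _ = 1 := hf1
  have hg1' : ∀ y, g y ≤ 1 := fun y => by
    calc g y ≤ ∑ z, g z := Finset.single_le_sum (fun z _ => hg0 z) (Finset.mem_univ y)
    _ = 1 := hg1
  have key := fun y => entropy_key (f y) (g y) εm εp (hf0 y) (hf1' y) (hg0 y) (hg1' y)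
    hεm hεm1 hεp1 (hgpos y) (hlow y) (hhigh y)
  constructor
  · have h : ∑ y, -(f y * Real.log (f y)) ≤
        ∑ y, (-(εp * (g y * Real.log (g y))) - εp * (g y * Real.log εm)) :=
      Finset.sum_le_sum (fun y _ => (key y).1)
    have e1 : ∑ y, (-(εp * (g y * Real.log (g y))) - εp * (g y * Real.log εm))
        = εp * pmfEntropy g - εp * Real.log εm := by
      rw [Finset.sum_sub_distrib]
      simp only [pmfEntropy, ← Finset.mul_sum, Finset.sum_neg_distrib]
      have : ∑ y, g y * Real.log εm = Real.log εm := by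
        rw [← Finset.sum_mul, hg1, one_mul]
      rw [this]; ring
    have e2 : ∑ y, -(f y * Real.log (f y)) = pmfEntropy f := by
      simp [pmfEntropy, Finset.sum_neg_distrib]
    rw [e1, e2] at h; exact h
  · have h : ∑ y, (-(εm * (g y * Real.log (g y))) - εm * (g y * Real.log εp)) ≤
        ∑ y, -(f y * Real.log (f y)) :=
      Finset.sum_le_sum (fun y _ => (key y).2)
    have e1 : ∑ y, (-(εm * (g y * Real.log (g y))) - εm * (g y * Real.log εp))
        = εm * pmfEntropy g - εm * Real.log εp := by
      rw [Finset.sum_sub_distrib]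
      simp only [pmfEntropy, ← Finset.mul_sum, Finset.sum_neg_distrib]
      have : ∑ y, g y * Real.log εp = Real.log εp := by
        rw [← Finset.sum_mul, hg1, one_mul]
      rw [this]; ring
    have e2 : ∑ y, -(f y * Real.log (f y)) = pmfEntropy f := by
      simp [pmfEntropy, Finset.sum_neg_distrib]
    rw [e1, e2] at h; exact h
end

section
/- Let f be a probability mass function on a product of finite sets Y₁×…×Y_h with marginals f₁,…,f_h, and suppose ε⁻ ∏ᵢ fᵢ(yᵢ) ≤ f(y) ≤ ε⁺ ∏ᵢ fᵢ(yᵢ) for all y, with 0 < ε⁻ ≤ 1 ≤ ε⁺. Then as ε⁺,ε⁻ → 1 (i.e., for any sequence of such f with ε⁺→1 and ε⁻→1), H(f) → Σᵢ H(fᵢ). In particular, |H(f) - Σᵢ H(fᵢ)| ≤ max(|ε⁺ - 1| Σᵢ H(fᵢ) - ε⁺ log ε⁻, |1 - ε⁻| Σᵢ H(fᵢ) - ε⁻ log ε⁺). -/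
open scoped BigOperators

/-- The `i`-th marginal of a PMF on a finite product. -/
noncomputable def marginal {h : ℕ} {Y : Fin h → Type*} [∀ i, Fintype (Y i)]
    [∀ i, DecidableEq (Y i)] (f : (∀ i, Y i) → ℝ) (i : Fin h) (x : Y i) : ℝ :=
  ∑ y : ∀ i, Y i, if y i = x then f y else 0

private lemma pointwise_bounds {εm εp a b : ℝ} (hεm : 0 < εm) (hεm1 : εm ≤ 1)
    (hεp : 1 ≤ εp) (hb : 0 ≤ b) (h1 : εm * b ≤ a) (h2 : a ≤ εp * b) :
    0 ≤ a * Real.log a - a * Real.log b - a + b ∧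
    a * Real.log a - a * Real.log b - a + b ≤
      (a - b) * Real.log εp + max (b - a) 0 * (Real.log εp - Real.log εm) := by
  rcases eq_or_lt_of_le hb with hb0 | hb0
  · have ha0 : a = 0 := le_antisymm (by nlinarith) (by nlinarith)
    simp [ha0, ← hb0]
  · have ha : 0 < a := lt_of_lt_of_le (mul_pos hεm hb0) h1
    have hεp0 : (0:ℝ) < εp := lt_of_lt_of_le one_pos hεp
    set L : ℝ := Real.log a - Real.log b with hL
    have hLd : L = Real.log (a / b) := by
      rw [hL, Real.log_div ha.ne' hb0.ne']
    have key1 : b * L ≤ a - b := by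
      have h := Real.log_le_sub_one_of_pos (div_pos ha hb0)
      have := mul_le_mul_of_nonneg_left h hb0.le
      rw [← hLd] at this
      calc b * L ≤ b * (a / b - 1) := this
        _ = a - b := by field_simp
    have key2 : a - b ≤ a * L := by
      have h := Real.log_le_sub_one_of_pos (div_pos hb0 ha)
      have h' := mul_le_mul_of_nonneg_left h ha.le
      have hd : Real.log (b / a) = -L := by
        rw [Real.log_div hb0.ne' ha.ne', hL]; ring
      rw [hd] at h'
      have : a * (b / a - 1) = b - a := by field_simp
      linarith [h'.trans_eq this]
    have hLp : L ≤ Real.log εp := by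
      have h := Real.log_le_log ha h2
      rw [Real.log_mul hεp0.ne' hb0.ne'] at h
      rw [hL]; linarith
    have hLm : Real.log εm ≤ L := by
      have h := Real.log_le_log (mul_pos hεm hb0) h1
      rw [Real.log_mul hεm.ne' hb0.ne'] at h
      rw [hL]; linarith
    have hexp : a * Real.log a - a * Real.log b = a * L := by rw [hL]; ring
    constructor
    · linarith
    · have hψχ : a * Real.log a - a * Real.log b - a + b ≤ (a - b) * L := by
        have : (a - b) * L = a * L - b * L := by ring
        linarith
      have hlogp : (0:ℝ) ≤ Real.log εp := Real.log_nonneg hεp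
      have hlogm : Real.log εm ≤ 0 := Real.log_nonpos hεm.le hεm1
      rcases le_total b a with hba | hba
      · have hmax : max (b - a) 0 = 0 := max_eq_right (by linarith)
        have : (a - b) * L ≤ (a - b) * Real.log εp :=
          mul_le_mul_of_nonneg_left hLp (by linarith)
        rw [hmax]; linarith
      · have hmax : max (b - a) 0 = b - a := max_eq_left (by linarith)
        have h3 : (a - b) * L ≤ (b - a) * (-Real.log εm) := by
          have e : (a - b) * L = (b - a) * (-L) := by ring
          rw [e]
          exact mul_le_mul_of_nonneg_left (by linarith) (by linarith)
        have e2 : (b - a) * (-Real.log εm)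
            = (a - b) * Real.log εp + (b - a) * (Real.log εp - Real.log εm) := by ring
        rw [hmax]; linarith

/-- if the joint PMF is multiplicatively `ε⁻, ε⁺`-close to the product of
its marginals, then the joint entropy is correspondingly close to the sum of the
marginal entropies; in particular `H(f) → Σᵢ H(fᵢ)` as `ε⁺, ε⁻ → 1`. -/
theorem entropy_close_to_sum_of_marginals {h : ℕ} {Y : Fin h → Type*}
    [∀ i, Fintype (Y i)] [∀ i, DecidableEq (Y i)]
    (f : (∀ i, Y i) → ℝ)
    (hf0 : ∀ y, 0 ≤ f y) (hf1 : ∑ y, f y = 1)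
    (εm εp : ℝ) (hεm : 0 < εm) (hεm1 : εm ≤ 1) (hεp1 : 1 ≤ εp)
    (hlow : ∀ y, εm * ∏ i, marginal f i (y i) ≤ f y)
    (hhigh : ∀ y, f y ≤ εp * ∏ i, marginal f i (y i)) :
    |pmfEntropy f - ∑ i, pmfEntropy (marginal f i)| ≤
      max (|εp - 1| * (∑ i, pmfEntropy (marginal f i)) - εp * Real.log εm)
          (|1 - εm| * (∑ i, pmfEntropy (marginal f i)) - εm * Real.log εp) := by
  classical
  set S : ℝ := ∑ i, pmfEntropy (marginal f i) with hS
  set g : (∀ i, Y i) → ℝ := fun y => ∏ i, marginal f i (y i) with hgdef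
  have hm0 : ∀ i x, 0 ≤ marginal f i x := by
    intro i x
    refine Finset.sum_nonneg fun y _ => ?_
    split
    · exact hf0 y
    · exact le_rfl
  have hmf : ∀ (i : Fin h) (y : ∀ i, Y i), f y ≤ marginal f i (y i) := by
    intro i y
    have := Finset.single_le_sum (f := fun y' : ∀ i, Y i => if y' i = y i then f y' else 0)
      (fun y' _ => by
        split
        · exact hf0 y'
        · exact le_rfl) (Finset.mem_univ y)
    simpa [marginal] using this
  have hm1 : ∀ i x, marginal f i x ≤ 1 := by
    intro i x
    rw [← hf1]
    refine Finset.sum_le_sum fun y _ => ?_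
    split
    · exact le_rfl
    · exact hf0 y
  have hmsum : ∀ i, ∑ x, marginal f i x = 1 := by
    intro i
    unfold marginal
    rw [Finset.sum_comm]
    simp [Finset.sum_ite_eq, hf1]
  have hg0 : ∀ y, 0 ≤ g y := fun y => Finset.prod_nonneg fun i _ => hm0 i (y i)
  have hgsum : ∑ y, g y = 1 := by
    have hpe := Finset.prod_univ_sum (fun i => (Finset.univ : Finset (Y i)))
      (fun i x => marginal f i x)
    rw [Fintype.piFinset_univ] at hpe
    have : ∑ y, g y = ∏ i, ∑ x, marginal f i x := by
      rw [← hpe]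
    rw [this]
    simp [hmsum]
  have hkey : ∀ i, ∑ y, f y * Real.log (marginal f i (y i))
      = ∑ x, marginal f i x * Real.log (marginal f i x) := by
    intro i
    calc ∑ y, f y * Real.log (marginal f i (y i))
        = ∑ y, ∑ x, (if y i = x then f y * Real.log (marginal f i x) else 0) := by
          refine Finset.sum_congr rfl fun y _ => ?_
          rw [Finset.sum_ite_eq]
          simp
      _ = ∑ x, ∑ y, (if y i = x then f y * Real.log (marginal f i x) else 0) :=
          Finset.sum_comm
      _ = ∑ x, marginal f i x * Real.log (marginal f i x) := by
          refine Finset.sum_congr rfl fun x _ => ?_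
          unfold marginal
          rw [Finset.sum_mul]
          refine Finset.sum_congr rfl fun y _ => ?_
          split <;> simp
  have hglog : ∀ y, f y * Real.log (g y) = ∑ i, f y * Real.log (marginal f i (y i)) := by
    intro y
    by_cases hy : f y = 0
    · simp [hy]
    · have hfy : 0 < f y := (hf0 y).lt_of_ne (Ne.symm hy)
      have : Real.log (g y) = ∑ i, Real.log (marginal f i (y i)) := by
        rw [hgdef]
        exact Real.log_prod fun i _ => ne_of_gt (lt_of_lt_of_le hfy (hmf i y))
      rw [this, Finset.mul_sum]
  have hSlog : S = -∑ y, f y * Real.log (g y) := by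
    rw [hS]
    have e1 : ∀ i : Fin h, pmfEntropy (marginal f i)
        = -∑ y, f y * Real.log (marginal f i (y i)) := by
      intro i; rw [pmfEntropy, hkey]
    calc ∑ i, pmfEntropy (marginal f i)
        = -∑ i, ∑ y, f y * Real.log (marginal f i (y i)) := by
          rw [← Finset.sum_neg_distrib]
          exact Finset.sum_congr rfl fun i _ => e1 i
      _ = -∑ y, ∑ i, f y * Real.log (marginal f i (y i)) := by rw [Finset.sum_comm]
      _ = -∑ y, f y * Real.log (g y) := by
          congr 1
          exact Finset.sum_congr rfl fun y _ => (hglog y).symm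
  set D : ℝ := ∑ y, (f y * Real.log (f y) - f y * Real.log (g y)) with hD
  have hED : pmfEntropy f - S = -D := by
    rw [hSlog, hD, pmfEntropy, Finset.sum_sub_distrib]
    ring
  have hDψ : D = ∑ y, (f y * Real.log (f y) - f y * Real.log (g y) - f y + g y) := by
    rw [hD]
    have : ∑ y, (f y * Real.log (f y) - f y * Real.log (g y) - f y + g y)
        = ∑ y, (f y * Real.log (f y) - f y * Real.log (g y)) - ∑ y, f y + ∑ y, g y := by
      rw [Finset.sum_add_distrib, Finset.sum_sub_distrib]
    rw [this, hf1, hgsum]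
    ring
  have hpt := fun y => pointwise_bounds (a := f y) (b := g y) hεm hεm1 hεp1
    (hg0 y) (hlow y) (hhigh y)
  have hDpos : 0 ≤ D := by
    rw [hDψ]
    exact Finset.sum_nonneg fun y _ => (hpt y).1
  have hlogp : (0:ℝ) ≤ Real.log εp := Real.log_nonneg hεp1
  have hlogm : Real.log εm ≤ 0 := Real.log_nonpos hεm.le hεm1
  have hDle : D ≤ (1 - εm) * (Real.log εp - Real.log εm) := by
    rw [hDψ]
    calc ∑ y, (f y * Real.log (f y) - f y * Real.log (g y) - f y + g y)
        ≤ ∑ y, ((f y - g y) * Real.log εp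
            + max (g y - f y) 0 * (Real.log εp - Real.log εm)) :=
          Finset.sum_le_sum fun y _ => (hpt y).2
      _ = (∑ y, (f y - g y)) * Real.log εp
            + (∑ y, max (g y - f y) 0) * (Real.log εp - Real.log εm) := by
          rw [Finset.sum_add_distrib, Finset.sum_mul, Finset.sum_mul]
      _ ≤ (1 - εm) * (Real.log εp - Real.log εm) := by
          have hz : ∑ y, (f y - g y) = 0 := by
            rw [Finset.sum_sub_distrib, hf1, hgsum]; ring
          have hN : ∑ y, max (g y - f y) 0 ≤ 1 - εm := by
            calc ∑ y, max (g y - f y) 0 ≤ ∑ y, (1 - εm) * g y := by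
                  refine Finset.sum_le_sum fun y _ => ?_
                  refine max_le ?_ (by nlinarith [hg0 y])
                  nlinarith [hlow y]
              _ = 1 - εm := by rw [← Finset.mul_sum, hgsum, mul_one]
          rw [hz, zero_mul, zero_add]
          exact mul_le_mul_of_nonneg_right hN (by linarith)
  have hSnn : 0 ≤ S := by
    rw [hS]
    refine Finset.sum_nonneg fun i _ => ?_
    rw [pmfEntropy, neg_nonneg]
    exact Finset.sum_nonpos fun x _ =>
      mul_nonpos_of_nonneg_of_nonpos (hm0 i x) (Real.log_nonpos (hm0 i x) (hm1 i x))
  have habs : |pmfEntropy f - S| = D := by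
    rw [hED, abs_neg, abs_of_nonneg hDpos]
  rw [habs]
  have step1 : D ≤ εp * (-Real.log εm) := by
    have h1m : 1 - εm ≤ -Real.log εm := by
      nlinarith [Real.log_le_sub_one_of_pos hεm]
    have hlp : Real.log εp ≤ εp - 1 := Real.log_le_sub_one_of_pos (by linarith)
    have e1 : (1 - εm) * Real.log εp ≤ (-Real.log εm) * (εp - 1) :=
      mul_le_mul h1m hlp hlogp (by linarith)
    have e2 : (1 - εm) * (-Real.log εm) ≤ 1 * (-Real.log εm) :=
      mul_le_mul_of_nonneg_right (by linarith) (by linarith)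
    nlinarith
  refine le_trans ?_ (le_max_left _ _)
  have : 0 ≤ |εp - 1| * S := mul_nonneg (abs_nonneg _) hSnn
  nlinarith [step1]
end

section
/- Let X, Y be finitely-valued random vectors of length hk, broken into h consecutive blocks X^{(1)},…,X^{(h)} and Y^{(1)},…,Y^{(h)} of length k. Suppose X has iid components (in particular the blocks X^{(i)} are iid) and the conditional PMF satisfies ε⁻ ∏_i f(y^{(i)}|x^{(i)}) ≤ f(y|x) ≤ ε⁺ ∏_i f(y^{(i)}|x^{(i)}) for all x, y, with 0 < ε⁻ ≤ 1 ≤ ε⁺, where f(y^{(i)}|x^{(i)}) denotes the common per-block conditional PMF. Then ε⁻ h H(Y^{(1)}|X^{(1)}) - ε⁻ log ε⁺ ≤ H(Y|X) ≤ ε⁺ h H(Y^{(1)}|X^{(1)}) - ε⁺ log ε⁻. -/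
open scoped BigOperators


lemma pi_sum_prod {ι A : Type*} [Fintype ι] [DecidableEq ι] [Fintype A] (g : ι → A → ℝ) :
    ∑ z : ι → A, ∏ i, g i (z i) = ∏ i, ∑ a, g i a := by
  classical
  rw [Finset.prod_univ_sum]
  rw [Fintype.piFinset_univ]

lemma weighted_one_point {ι A : Type*} [Fintype ι] [DecidableEq ι] [Fintype A]
    (q : ι → A → ℝ) (hq : ∀ j, ∑ a, q j a = 1) (r : A → ℝ) (i : ι) :
    ∑ z : ι → A, (∏ j, q j (z j)) * r (z i) = ∑ a, q i a * r a := by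
  have h1 : ∀ z : ι → A, (∏ j, q j (z j)) * r (z i)
      = ∏ j, (q j (z j) * if j = i then r (z j) else 1) := by
    intro z
    rw [Finset.prod_mul_distrib]
    congr 1
    simp [Finset.prod_ite_eq']
  simp_rw [h1]
  rw [pi_sum_prod fun j a => q j a * if j = i then r a else 1]
  have h2 : ∀ j, (∑ a, q j a * if j = i then r a else 1)
      = if j = i then (∑ a, q i a * r a) else 1 := by
    intro j
    by_cases hj : j = i
    · subst hj; simp
    · simp [hj, hq j]
  simp_rw [h2]
  simp [Finset.prod_ite_eq']

lemma lower_pt (F g εm εp : ℝ) (hF0 : 0 ≤ F) (hF1 : F ≤ 1) (hg0 : 0 ≤ g)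
    (hεm : 0 < εm) (hεp : 1 ≤ εp) (hl : εm * g ≤ F) (hh : F ≤ εp * g) :
    εm * g * (-(Real.log εp) - Real.log g) ≤ -(F * Real.log F) := by
  rcases eq_or_lt_of_le hg0 with hg | hg
  · have hF : F = 0 := le_antisymm (by nlinarith) hF0
    simp [← hg, hF]
  · have hFpos : 0 < F := lt_of_lt_of_le (by positivity) hl
    have h1 : Real.log F ≤ Real.log (εp * g) := Real.log_le_log hFpos hh
    have h2 : Real.log (εp * g) = Real.log εp + Real.log g :=
      Real.log_mul (by positivity) (ne_of_gt hg)
    calc εm * g * (-(Real.log εp) - Real.log g)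
        = εm * g * (-(Real.log (εp * g))) := by rw [h2]; ring
      _ ≤ εm * g * (-(Real.log F)) := by
          apply mul_le_mul_of_nonneg_left (neg_le_neg h1) (by positivity)
      _ ≤ F * (-(Real.log F)) := by
          have hlF : Real.log F ≤ 0 := Real.log_nonpos hF0 hF1
          apply mul_le_mul_of_nonneg_right hl (by linarith)
      _ = -(F * Real.log F) := by ring

lemma upper_pt (F g εm εp : ℝ) (hF0 : 0 ≤ F) (hF1 : F ≤ 1) (hg0 : 0 ≤ g)
    (hεm : 0 < εm) (hεp : 1 ≤ εp) (hl : εm * g ≤ F) (hh : F ≤ εp * g) :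
    -(F * Real.log F) ≤ εp * g * (-(Real.log εm) - Real.log g) := by
  rcases eq_or_lt_of_le hg0 with hg | hg
  · have hF : F = 0 := le_antisymm (by nlinarith) hF0
    simp [← hg, hF]
  · have hFpos : 0 < F := lt_of_lt_of_le (by positivity) hl
    have h1 : Real.log (εm * g) ≤ Real.log F := Real.log_le_log (by positivity) hl
    have h2 : Real.log (εm * g) = Real.log εm + Real.log g :=
      Real.log_mul (ne_of_gt hεm) (ne_of_gt hg)
    have hlF : Real.log F ≤ 0 := Real.log_nonpos hF0 hF1
    calc -(F * Real.log F) = F * (-(Real.log F)) := by ring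
      _ ≤ εp * g * (-(Real.log F)) := by
          apply mul_le_mul_of_nonneg_right hh (by linarith)
      _ ≤ εp * g * (-(Real.log (εm * g))) := by
          apply mul_le_mul_of_nonneg_left (neg_le_neg h1) (by positivity)
      _ = εp * g * (-(Real.log εm) - Real.log g) := by rw [h2]; ring

/-- conditional-entropy sandwich bound for a block channel with iid
block inputs whose conditional PMF is multiplicatively close to a product of identical
per-block conditional PMFs.  Here `B` is the alphabet of a length-`k` input block, `C`
that of a length-`k` output block, `px` the common (iid) per-block input PMF, `w` the
common per-block conditional PMF, and `f` the joint conditional PMF over `h` blocks. -/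
theorem conditional_entropy_sandwich {B C : Type*} [Fintype B] [Fintype C] {h : ℕ}
    (px : B → ℝ) (hpx0 : ∀ b, 0 ≤ px b) (hpx1 : ∑ b, px b = 1)
    (w : B → C → ℝ) (hw0 : ∀ b c, 0 ≤ w b c) (hw1 : ∀ b, ∑ c, w b c = 1)
    (f : (Fin h → B) → (Fin h → C) → ℝ)
    (hf0 : ∀ x y, 0 ≤ f x y) (hf1 : ∀ x, ∑ y, f x y = 1)
    (εm εp : ℝ) (hεm : 0 < εm) (hεm1 : εm ≤ 1) (hεp1 : 1 ≤ εp)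
    (hlow : ∀ x y, εm * ∏ i, w (x i) (y i) ≤ f x y)
    (hhigh : ∀ x y, f x y ≤ εp * ∏ i, w (x i) (y i)) :
    εm * (h : ℝ) * (-∑ b, ∑ c, px b * w b c * Real.log (w b c)) - εm * Real.log εp ≤
        -∑ x : Fin h → B, ∑ y : Fin h → C,
            (∏ i, px (x i)) * f x y * Real.log (f x y) ∧
      -∑ x : Fin h → B, ∑ y : Fin h → C,
            (∏ i, px (x i)) * f x y * Real.log (f x y) ≤
        εp * (h : ℝ) * (-∑ b, ∑ c, px b * w b c * Real.log (w b c)) - εp * Real.log εm := by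
  classical
  set S : ℝ := ∑ b, ∑ c, px b * w b c * Real.log (w b c) with hS
  -- basic facts
  have hG0 : ∀ (x : Fin h → B) (y : Fin h → C), 0 ≤ ∏ i, w (x i) (y i) := by
    intro x y; exact Finset.prod_nonneg fun i _ => hw0 _ _
  have hP0 : ∀ x : Fin h → B, 0 ≤ ∏ i, px (x i) := by
    intro x; exact Finset.prod_nonneg fun i _ => hpx0 _
  have hF1 : ∀ x y, f x y ≤ 1 := by
    intro x y
    calc f x y ≤ ∑ y', f x y' :=
          Finset.single_le_sum (fun y' _ => hf0 x y') (Finset.mem_univ y)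
      _ = 1 := hf1 x
  -- T b = inner conditional-entropy sum
  set T : B → ℝ := fun b => ∑ c, w b c * Real.log (w b c) with hT
  have hST : S = ∑ b, px b * T b := by
    rw [hS]
    apply Finset.sum_congr rfl
    intro b _
    rw [hT, Finset.mul_sum]
    apply Finset.sum_congr rfl
    intro c _
    ring
  -- identity A1
  have A1 : ∑ x : Fin h → B, ∑ y : Fin h → C,
      (∏ i, px (x i)) * ∏ i, w (x i) (y i) = 1 := by
    have inner : ∀ x : Fin h → B, ∑ y : Fin h → C, ∏ i, w (x i) (y i) = 1 := by
      intro x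
      rw [pi_sum_prod fun i c => w (x i) c]
      simp [hw1]
    simp_rw [← Finset.mul_sum, inner, mul_one]
    rw [pi_sum_prod fun _ b => px b]
    simp [hpx1]
  -- identity A2
  have A2 : ∑ x : Fin h → B, ∑ y : Fin h → C,
      (∏ i, px (x i)) * ((∏ i, w (x i) (y i)) * Real.log (∏ i, w (x i) (y i)))
      = (h : ℝ) * S := by
    have glog : ∀ (x : Fin h → B) (y : Fin h → C),
        (∏ i, w (x i) (y i)) * Real.log (∏ i, w (x i) (y i))
        = ∑ i, (∏ j, w (x j) (y j)) * Real.log (w (x i) (y i)) := by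
      intro x y
      by_cases hG : (∏ i, w (x i) (y i)) = 0
      · simp [hG]
      · have hne : ∀ i ∈ Finset.univ, w (x i) (y i) ≠ 0 := by
          intro i _ hz
          exact hG (Finset.prod_eq_zero (Finset.mem_univ i) hz)
        rw [Real.log_prod hne, Finset.mul_sum]
    simp_rw [glog, Finset.mul_sum]
    have step1 : ∀ x : Fin h → B, ∑ y : Fin h → C, ∑ i,
        (∏ i', px (x i')) * ((∏ j, w (x j) (y j)) * Real.log (w (x i) (y i)))
        = ∑ i, ∑ y : Fin h → C,
        (∏ i', px (x i')) * ((∏ j, w (x j) (y j)) * Real.log (w (x i) (y i))) := by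
      intro x; exact Finset.sum_comm
    simp_rw [step1]
    rw [Finset.sum_comm]
    have step2 : ∀ i : Fin h, ∑ x : Fin h → B, ∑ y : Fin h → C,
        (∏ i', px (x i')) * ((∏ j, w (x j) (y j)) * Real.log (w (x i) (y i))) = S := by
      intro i
      have inner : ∀ x : Fin h → B, ∑ y : Fin h → C,
          (∏ j, w (x j) (y j)) * Real.log (w (x i) (y i)) = T (x i) := by
        intro x
        rw [weighted_one_point (fun j => w (x j)) (fun j => hw1 (x j))
          (fun c => Real.log (w (x i) c)) i]
      simp_rw [← Finset.mul_sum, inner]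
      rw [weighted_one_point (fun _ => px) (fun _ => hpx1) T i]
      exact hST.symm
    simp_rw [step2]
    simp [mul_comm]
  have A1' : ∑ x : Fin h → B, (∏ i, px (x i)) * ∑ y : Fin h → C, ∏ i, w (x i) (y i) = 1 := by
    rw [← A1]
    exact Finset.sum_congr rfl fun x _ => Finset.mul_sum _ _ _
  have A2' : ∑ x : Fin h → B, (∏ i, px (x i)) * ∑ y : Fin h → C,
      ((∏ i, w (x i) (y i)) * Real.log (∏ i, w (x i) (y i))) = (h : ℝ) * S := by
    rw [← A2]
    exact Finset.sum_congr rfl fun x _ => Finset.mul_sum _ _ _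
  -- pointwise bounds with weights
  have ptw : ∀ (x : Fin h → B) (y : Fin h → C),
      (∏ i, px (x i)) * (εm * (∏ i, w (x i) (y i)) *
          (-(Real.log εp) - Real.log (∏ i, w (x i) (y i))))
        ≤ -((∏ i, px (x i)) * f x y * Real.log (f x y)) ∧
      -((∏ i, px (x i)) * f x y * Real.log (f x y))
        ≤ (∏ i, px (x i)) * (εp * (∏ i, w (x i) (y i)) *
          (-(Real.log εm) - Real.log (∏ i, w (x i) (y i)))) := by
    intro x y
    have hlo := lower_pt (f x y) (∏ i, w (x i) (y i)) εm εp (hf0 x y) (hF1 x y)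
      (hG0 x y) hεm hεp1 (hlow x y) (hhigh x y)
    have hup := upper_pt (f x y) (∏ i, w (x i) (y i)) εm εp (hf0 x y) (hF1 x y)
      (hG0 x y) hεm hεp1 (hlow x y) (hhigh x y)
    constructor
    · calc (∏ i, px (x i)) * (εm * (∏ i, w (x i) (y i)) *
            (-(Real.log εp) - Real.log (∏ i, w (x i) (y i))))
          ≤ (∏ i, px (x i)) * (-(f x y * Real.log (f x y))) :=
            mul_le_mul_of_nonneg_left hlo (hP0 x)
        _ = -((∏ i, px (x i)) * f x y * Real.log (f x y)) := by ring
    · calc -((∏ i, px (x i)) * f x y * Real.log (f x y))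
          = (∏ i, px (x i)) * (-(f x y * Real.log (f x y))) := by ring
        _ ≤ (∏ i, px (x i)) * (εp * (∏ i, w (x i) (y i)) *
            (-(Real.log εm) - Real.log (∏ i, w (x i) (y i)))) :=
            mul_le_mul_of_nonneg_left hup (hP0 x)
  have negsum : -∑ x : Fin h → B, ∑ y : Fin h → C,
      (∏ i, px (x i)) * f x y * Real.log (f x y)
      = ∑ x : Fin h → B, ∑ y : Fin h → C,
      -((∏ i, px (x i)) * f x y * Real.log (f x y)) := by
    simp [Finset.sum_neg_distrib]
  constructor
  · -- lower bound
    have sumL : ∑ x : Fin h → B, ∑ y : Fin h → C,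
        (∏ i, px (x i)) * (εm * (∏ i, w (x i) (y i)) *
          (-(Real.log εp) - Real.log (∏ i, w (x i) (y i))))
        ≤ ∑ x : Fin h → B, ∑ y : Fin h → C,
        -((∏ i, px (x i)) * f x y * Real.log (f x y)) :=
      Finset.sum_le_sum fun x _ => Finset.sum_le_sum fun y _ => (ptw x y).1
    have eqL : ∑ x : Fin h → B, ∑ y : Fin h → C,
        (∏ i, px (x i)) * (εm * (∏ i, w (x i) (y i)) *
          (-(Real.log εp) - Real.log (∏ i, w (x i) (y i))))
        = (εm * (-(Real.log εp))) * 1 - εm * ((h : ℝ) * S) := by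
      have expand : ∀ (x : Fin h → B) (y : Fin h → C),
          (∏ i, px (x i)) * (εm * (∏ i, w (x i) (y i)) *
            (-(Real.log εp) - Real.log (∏ i, w (x i) (y i))))
          = (εm * (-(Real.log εp))) * ((∏ i, px (x i)) * ∏ i, w (x i) (y i))
            - εm * ((∏ i, px (x i)) *
              ((∏ i, w (x i) (y i)) * Real.log (∏ i, w (x i) (y i)))) := by
        intro x y; ring
      simp_rw [expand, Finset.sum_sub_distrib, ← Finset.mul_sum]
      rw [A1', A2']
    rw [negsum]
    calc εm * (h : ℝ) * (-S) - εm * Real.log εp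
        = (εm * (-(Real.log εp))) * 1 - εm * ((h : ℝ) * S) := by ring
      _ = _ := eqL.symm
      _ ≤ _ := sumL
  · -- upper bound
    have sumU : ∑ x : Fin h → B, ∑ y : Fin h → C,
        -((∏ i, px (x i)) * f x y * Real.log (f x y))
        ≤ ∑ x : Fin h → B, ∑ y : Fin h → C,
        (∏ i, px (x i)) * (εp * (∏ i, w (x i) (y i)) *
          (-(Real.log εm) - Real.log (∏ i, w (x i) (y i)))) :=
      Finset.sum_le_sum fun x _ => Finset.sum_le_sum fun y _ => (ptw x y).2
    have eqU : ∑ x : Fin h → B, ∑ y : Fin h → C,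
        (∏ i, px (x i)) * (εp * (∏ i, w (x i) (y i)) *
          (-(Real.log εm) - Real.log (∏ i, w (x i) (y i))))
        = (εp * (-(Real.log εm))) * 1 - εp * ((h : ℝ) * S) := by
      have expand : ∀ (x : Fin h → B) (y : Fin h → C),
          (∏ i, px (x i)) * (εp * (∏ i, w (x i) (y i)) *
            (-(Real.log εm) - Real.log (∏ i, w (x i) (y i))))
          = (εp * (-(Real.log εm))) * ((∏ i, px (x i)) * ∏ i, w (x i) (y i))
            - εp * ((∏ i, px (x i)) *
              ((∏ i, w (x i) (y i)) * Real.log (∏ i, w (x i) (y i)))) := by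
        intro x y; ring
      simp_rw [expand, Finset.sum_sub_distrib, ← Finset.mul_sum]
      rw [A1', A2']
    rw [negsum]
    calc ∑ x : Fin h → B, ∑ y : Fin h → C,
          -((∏ i, px (x i)) * f x y * Real.log (f x y)) ≤ _ := sumU
      _ = (εp * (-(Real.log εm))) * 1 - εp * ((h : ℝ) * S) := eqU
      _ = εp * (h : ℝ) * (-S) - εp * Real.log εm := by ring
end

section
/- If c* belongs to the broken-chain degraded family D_c of a Markov channel c (i.e., there exists side information U, independent of the input, whose knowledge turns c* into independent piecewise segments each distributed as c), and c' is formed by mixing c and c* with parameters μ₁₂, μ₂₁ ∈ (0,1), then c' also belongs to D_c. -/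
open scoped BigOperators

/-- An abstract channel: a conditional weight for each input/output sequence pair. -/
def SeqChannel (X Y : Type*) : Type _ := List X → List Y → ℝ

/-- The law of a hidden-Markov (Markov) channel run from initial state distribution
`init`, with state transition kernel `P` and state-dependent memoryless noise `f`. -/
noncomputable def hmmLaw {S X Y : Type*} [Fintype S]
    (P : S → S → ℝ) (f : S → X → Y → ℝ) : (S → ℝ) → List X → List Y → ℝ
  | _, [], [] => 1
  | init, x :: xs, y :: ys => ∑ s, init s * f s x y * hmmLaw P f (P s) xs ys
  | _, _, _ => 0

/-- A finite-state Markov channel: hidden state chain `P` with steady-state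
distribution `π`, independent of the input, and memoryless-given-state noise `f`. -/
structure MarkovChannel (S X Y : Type*) [Fintype S] where
  P : S → S → ℝ
  π : S → ℝ
  f : S → X → Y → ℝ

/-- The input-output law of a Markov channel (started in steady state). -/
noncomputable def MarkovChannel.law {S X Y : Type*} [Fintype S]
    (c : MarkovChannel S X Y) : SeqChannel X Y :=
  hmmLaw c.P c.f c.π

/-- The law of a piecewise channel: the sequence is cut into independent segments
according to the composition `cmp` of `n`, and the channel `W` acts independently
(restarting) on each segment. -/
noncomputable def pieceLaw {X Y : Type*} (W : SeqChannel X Y) (n : ℕ)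
    (cmp : Composition n) (xs : List X) (ys : List Y) : ℝ :=
  (((xs.splitWrtComposition cmp).zip (ys.splitWrtComposition cmp)).map
    (fun p => W p.1 p.2)).prod

/-- The broken-chain degraded family: `W* ∈ D_W` iff for each block length `n` there
is side information `U` (finitely valued, with distribution `q` independent of the
input) such that, conditionally on `U = u`, the channel decomposes into independent
piecewise segments each governed by `W`. -/
def BrokenChainDegraded {X Y : Type*} (W Wstar : SeqChannel X Y) : Prop :=
  ∀ n : ℕ, ∃ (U : Type) (_ : Fintype U) (q : U → ℝ) (seg : U → Composition n),
    (∀ u, 0 ≤ q u) ∧ (∑ u, q u = 1) ∧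
      ∀ (xs : List X) (ys : List Y), xs.length = n → ys.length = n →
        Wstar xs ys = ∑ u, q u * pieceLaw W n (seg u) xs ys

/-- The mixing operator on Markov channels: the state machine jumps from that of `c₁`
to that of `c₂` with per-step probability `μ₁₂` (restarting in the steady state `c₂.π`)
and back with probability `μ₂₁` (restarting in `c₁.π`). -/
noncomputable def MarkovChannel.mix {S₁ S₂ X Y : Type*} [Fintype S₁] [Fintype S₂]
    (c₁ : MarkovChannel S₁ X Y) (c₂ : MarkovChannel S₂ X Y) (μ₁₂ μ₂₁ : ℝ) :
    MarkovChannel (S₁ ⊕ S₂) X Y where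
  P := fun s t =>
    match s, t with
    | .inl s₁, .inl t₁ => (1 - μ₁₂) * c₁.P s₁ t₁
    | .inl _,  .inr t₂ => μ₁₂ * c₂.π t₂
    | .inr _,  .inl t₁ => μ₂₁ * c₁.π t₁
    | .inr s₂, .inr t₂ => (1 - μ₂₁) * c₂.P s₂ t₂
  π := Sum.elim (fun s₁ => (μ₂₁ / (μ₁₂ + μ₂₁)) * c₁.π s₁)
                (fun s₂ => (1 - μ₂₁ / (μ₁₂ + μ₂₁)) * c₂.π s₂)
  f := Sum.elim c₁.f c₂.f

/-! ### Auxiliary material -/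

section Aux

variable {S S' T X Y : Type*} [Fintype S] [Fintype S'] [Fintype T]

/- #### Compositions and piecewise laws -/

theorem splitAux_append {α : Type*} (ns ms : List ℕ) (l : List α) :
    l.splitWrtCompositionAux (ns ++ ms) =
      (l.take ns.sum).splitWrtCompositionAux ns ++ (l.drop ns.sum).splitWrtCompositionAux ms := by
  induction ns generalizing l with
  | nil => simp [List.splitWrtCompositionAux]
  | cons n ns ih =>
    have h1 : List.take n (List.take (n + ns.sum) l) = List.take n l := by
      rw [List.take_take]; congr 1; all_goals omega
    have h2 : List.drop n (List.take (n + ns.sum) l) = List.take ns.sum (List.drop n l) := by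
      rw [List.drop_take]; congr 1; omega
    have h3 : List.drop (n + ns.sum) l = List.drop ns.sum (List.drop n l) := by
      rw [List.drop_drop]
    simp only [List.cons_append, List.splitWrtCompositionAux_cons, List.sum_cons, h1, h2, h3,
      ih (l.drop n)]

/-- Concatenation of two compositions. -/
def compJoin {a b n : ℕ} (h : a + b = n) (γ₁ : Composition a) (γ₂ : Composition b) :
    Composition n where
  blocks := γ₁.blocks ++ γ₂.blocks
  blocks_pos := by
    intro i hi
    rcases List.mem_append.1 hi with h' | h'
    · exact γ₁.blocks_pos h'
    · exact γ₂.blocks_pos h'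
  blocks_sum := by rw [List.sum_append, γ₁.blocks_sum, γ₂.blocks_sum, h]

theorem pieceLaw_join (W : SeqChannel X Y) {a b n : ℕ} (h : a + b = n)
    (γ₁ : Composition a) (γ₂ : Composition b) (xs : List X) (ys : List Y) :
    pieceLaw W n (compJoin h γ₁ γ₂) xs ys =
      pieceLaw W a γ₁ (xs.take a) (ys.take a) * pieceLaw W b γ₂ (xs.drop a) (ys.drop a) := by
  simp only [pieceLaw, List.splitWrtComposition]
  have hx1 : (xs.splitWrtCompositionAux (compJoin h γ₁ γ₂).blocks) =
      (xs.take a).splitWrtCompositionAux γ₁.blocks ++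
        (xs.drop a).splitWrtCompositionAux γ₂.blocks := by
    have := splitAux_append γ₁.blocks γ₂.blocks xs
    rwa [γ₁.blocks_sum] at this
  have hy1 : (ys.splitWrtCompositionAux (compJoin h γ₁ γ₂).blocks) =
      (ys.take a).splitWrtCompositionAux γ₁.blocks ++
        (ys.drop a).splitWrtCompositionAux γ₂.blocks := by
    have := splitAux_append γ₁.blocks γ₂.blocks ys
    rwa [γ₁.blocks_sum] at this
  rw [hx1, hy1,
    List.zip_append (by rw [List.length_splitWrtCompositionAux, List.length_splitWrtCompositionAux]),
    List.map_append, List.prod_append]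

theorem pieceLaw_single (W : SeqChannel X Y) {n : ℕ} (h : 0 < n)
    (xs : List X) (ys : List Y) (hx : xs.length = n) (hy : ys.length = n) :
    pieceLaw W n (Composition.single n h) xs ys = W xs ys := by
  simp only [pieceLaw, List.splitWrtComposition, Composition.single_blocks]
  simp [List.splitWrtCompositionAux, List.take_of_length_le, hx.le, hy.le]

theorem composition_zero_blocks (γ : Composition 0) : γ.blocks = [] := by
  cases hb : γ.blocks with
  | nil => rfl
  | cons b bs =>
    exfalso
    have h1 : 0 < b := γ.blocks_pos (hb ▸ List.mem_cons_self (a := b) (l := bs))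
    have h2 := γ.blocks_sum
    rw [hb] at h2
    simp at h2
    omega

theorem pieceLaw_zero (W : SeqChannel X Y) (γ : Composition 0)
    (xs : List X) (ys : List Y) : pieceLaw W 0 γ xs ys = 1 := by
  simp only [pieceLaw, List.splitWrtComposition, composition_zero_blocks]
  simp [List.splitWrtCompositionAux]

/- #### Basic properties of `hmmLaw` -/

theorem hmmLaw_cons (P : S → S → ℝ) (f : S → X → Y → ℝ) (init : S → ℝ)
    (x : X) (xs : List X) (y : Y) (ys : List Y) :
    hmmLaw P f init (x :: xs) (y :: ys) = ∑ s, init s * f s x y * hmmLaw P f (P s) xs ys := rfl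

theorem hmmLaw_cons_nil (P : S → S → ℝ) (f : S → X → Y → ℝ) (init : S → ℝ)
    (x : X) (xs : List X) : hmmLaw P f init (x :: xs) [] = 0 := rfl

theorem hmmLaw_smul (P : S → S → ℝ) (f : S → X → Y → ℝ) (r : ℝ) (init : S → ℝ)
    (xs : List X) (ys : List Y) (h : xs ≠ []) :
    hmmLaw P f (fun s => r * init s) xs ys = r * hmmLaw P f init xs ys := by
  cases xs with
  | nil => exact absurd rfl h
  | cons x xs =>
    cases ys with
    | nil => rw [hmmLaw_cons_nil, hmmLaw_cons_nil, mul_zero]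
    | cons y ys =>
      rw [hmmLaw_cons, hmmLaw_cons, Finset.mul_sum]
      exact Finset.sum_congr rfl fun s _ => by ring

theorem hmmLaw_add (P : S → S → ℝ) (f : S → X → Y → ℝ) (i₁ i₂ : S → ℝ)
    (xs : List X) (ys : List Y) (h : xs ≠ []) :
    hmmLaw P f (fun s => i₁ s + i₂ s) xs ys =
      hmmLaw P f i₁ xs ys + hmmLaw P f i₂ xs ys := by
  cases xs with
  | nil => exact absurd rfl h
  | cons x xs =>
    cases ys with
    | nil => rw [hmmLaw_cons_nil, hmmLaw_cons_nil, hmmLaw_cons_nil, add_zero]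
    | cons y ys =>
      rw [hmmLaw_cons, hmmLaw_cons, hmmLaw_cons, ← Finset.sum_add_distrib]
      exact Finset.sum_congr rfl fun s _ => by ring

theorem hmmLaw_congr (P : S → S → ℝ) (f : S → X → Y → ℝ) (i₁ i₂ : S → ℝ)
    (h : ∀ s, i₁ s = i₂ s) (xs : List X) (ys : List Y) :
    hmmLaw P f i₁ xs ys = hmmLaw P f i₂ xs ys := by
  have : i₁ = i₂ := funext h
  rw [this]

theorem hmmLaw_reindex (e : S ≃ T) (P : T → T → ℝ) (f : T → X → Y → ℝ) (init : T → ℝ)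
    (xs : List X) (ys : List Y) :
    hmmLaw (fun s t => P (e s) (e t)) (fun s => f (e s)) (fun s => init (e s)) xs ys =
      hmmLaw P f init xs ys := by
  induction xs generalizing ys init with
  | nil => cases ys <;> rfl
  | cons x xs ih =>
    cases ys with
    | nil => rfl
    | cons y ys =>
      rw [hmmLaw_cons, hmmLaw_cons]
      refine Fintype.sum_equiv e _ _ fun s => ?_
      rw [ih]

/-- The key decomposition: in a two-machine hidden Markov chain started inside the first
machine, conditioning on the (input-independent) time of the first jump decomposes the law
into a first segment governed by the first machine and a remainder started at the restart
distribution of the second machine. -/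
theorem decomp (Pm : S ⊕ S' → S ⊕ S' → ℝ) (fm : S ⊕ S' → X → Y → ℝ)
    (P₁ : S → S → ℝ) (f₁ : S → X → Y → ℝ) (μ : ℝ) (ρ : S' → ℝ)
    (hP : ∀ s : S, Pm (Sum.inl s) = Sum.elim (fun t => (1 - μ) * P₁ s t) (fun t => μ * ρ t))
    (hf : ∀ s : S, fm (Sum.inl s) = f₁ s)
    (xs : List X) :
    ∀ (ys : List Y) (init : S → ℝ), xs.length = ys.length → xs ≠ [] →
      hmmLaw Pm fm (Sum.elim init 0) xs ys =
        (∑ j ∈ Finset.range (xs.length - 1), (1 - μ) ^ j * μ *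
            hmmLaw P₁ f₁ init (xs.take (j + 1)) (ys.take (j + 1)) *
            hmmLaw Pm fm (Sum.elim 0 ρ) (xs.drop (j + 1)) (ys.drop (j + 1))) +
          (1 - μ) ^ (xs.length - 1) * hmmLaw P₁ f₁ init xs ys := by
  have key : ∀ (s : S) (xs : List X) (ys : List Y), xs ≠ [] →
      hmmLaw Pm fm (Pm (Sum.inl s)) xs ys =
        (1 - μ) * hmmLaw Pm fm (Sum.elim (P₁ s) 0) xs ys +
          μ * hmmLaw Pm fm (Sum.elim 0 ρ) xs ys := by
    intro s xs ys hne
    rw [hP s]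
    rw [hmmLaw_congr Pm fm _
      (fun u => (fun u => (1 - μ) * Sum.elim (P₁ s) (0 : S' → ℝ) u) u +
        (fun u => μ * Sum.elim (0 : S → ℝ) ρ u) u)
      (by intro u; cases u <;> simp)]
    rw [hmmLaw_add Pm fm _ _ _ _ hne, hmmLaw_smul Pm fm _ _ _ _ hne,
      hmmLaw_smul Pm fm _ _ _ _ hne]
  have cons_eq : ∀ (init : S → ℝ) (x : X) (xs : List X) (y : Y) (ys : List Y),
      hmmLaw Pm fm (Sum.elim init 0) (x :: xs) (y :: ys) =
        ∑ s : S, init s * f₁ s x y * hmmLaw Pm fm (Pm (Sum.inl s)) xs ys := by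
    intro init x xs y ys
    rw [hmmLaw_cons, Fintype.sum_sum_type]
    simp [hf]
  induction xs with
  | nil => intro ys init _ hne; exact absurd rfl hne
  | cons x xs ih =>
    intro ys init hlen hne
    cases ys with
    | nil => simp at hlen
    | cons y ys =>
      cases xs with
      | nil =>
        cases ys with
        | nil =>
          rw [cons_eq]
          simp only [List.length_cons, List.length_nil, Nat.add_eq, Nat.zero_add,
            Nat.sub_self, Finset.range_zero, Finset.sum_empty, pow_zero, one_mul, zero_add]
          rw [hmmLaw_cons]
          exact Finset.sum_congr rfl fun s _ => rfl
        | cons y' ys' => simp at hlen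
      | cons x' xs' =>
        have hlen' : (x' :: xs').length = ys.length := by simpa using hlen
        have hne' : (x' :: xs') ≠ [] := by simp
        rw [cons_eq]
        have hkey : ∀ s : S, hmmLaw Pm fm (Pm (Sum.inl s)) (x' :: xs') ys =
            (1 - μ) * hmmLaw Pm fm (Sum.elim (P₁ s) 0) (x' :: xs') ys +
              μ * hmmLaw Pm fm (Sum.elim 0 ρ) (x' :: xs') ys :=
          fun s => key s _ _ hne'
        simp only [hkey]
        simp only [ih ys _ hlen' hne']
        simp only [List.length_cons, Nat.add_sub_cancel]
        rw [Finset.sum_range_succ']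
        simp only [List.take_succ_cons, List.drop_succ_cons, List.take_zero, List.drop_zero,
          pow_zero, one_mul]
        have e2 : hmmLaw P₁ f₁ init [x] [y] = ∑ s, init s * f₁ s x y := by
          rw [hmmLaw_cons]
          exact Finset.sum_congr rfl fun s _ => by
            rw [show hmmLaw P₁ f₁ (P₁ s) [] [] = 1 from rfl, mul_one]
        have e3 : hmmLaw P₁ f₁ init (x :: x' :: xs') (y :: ys) =
            ∑ s, init s * f₁ s x y * hmmLaw P₁ f₁ (P₁ s) (x' :: xs') ys := rfl
        have e1 : ∀ j, hmmLaw P₁ f₁ init (x :: x' :: List.take j xs') (y :: List.take (j + 1) ys) =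
            ∑ s, init s * f₁ s x y *
              hmmLaw P₁ f₁ (P₁ s) (x' :: List.take j xs') (List.take (j + 1) ys) := fun j => rfl
        rw [e2, e3]
        simp only [e1]
        simp only [Finset.mul_sum, Finset.sum_mul, mul_add, add_mul, Finset.sum_add_distrib]
        rw [Finset.sum_comm, add_right_comm]
        congr 1
        · congr 1
          · exact Finset.sum_congr rfl fun j _ => Finset.sum_congr rfl fun s _ => by ring
          · exact Finset.sum_congr rfl fun s _ => by ring
        · exact Finset.sum_congr rfl fun s _ => by ring

/- #### Broken-chain representations -/

/-- Data witnessing a broken-chain representation of the channel `V` by the channel `W`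
at block length `n`. -/
structure RepData (W V : SeqChannel X Y) (n : ℕ) where
  U : Type
  [fin : Fintype U]
  q : U → ℝ
  seg : U → Composition n
  q0 : ∀ u, 0 ≤ q u
  qsum : ∑ u, q u = 1
  eq : ∀ (xs : List X) (ys : List Y), xs.length = n → ys.length = n →
    V xs ys = ∑ u, q u * pieceLaw W n (seg u) xs ys

attribute [instance] RepData.fin

/-- The trivial representation of `W` by itself (one block). -/
noncomputable def trivRep (W : SeqChannel X Y) (m : ℕ) (h : 0 < m) : RepData W W m where
  U := Unit
  q := fun _ => 1
  seg := fun _ => Composition.single m h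
  q0 := fun _ => zero_le_one
  qsum := by simp
  eq := by
    intro xs ys hx hy
    simp [pieceLaw_single W h xs ys hx hy]

/-- The trivial representation at block length `0` of any channel with `V [] [] = 1`. -/
noncomputable def zeroRep (W V : SeqChannel X Y) (h : V [] [] = 1) : RepData W V 0 where
  U := Unit
  q := fun _ => 1
  seg := fun _ => Composition.ones 0
  q0 := fun _ => zero_le_one
  qsum := by simp
  eq := by
    intro xs ys hx hy
    rw [List.length_eq_zero_iff] at hx hy
    subst hx; subst hy
    simp [pieceLaw_zero, h]

theorem geom_weights (μ : ℝ) (m : ℕ) :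
    (∑ j ∈ Finset.range m, (1 - μ) ^ j * μ) + (1 - μ) ^ m = 1 := by
  have g := geom_sum_mul (1 - μ) m
  rw [← Finset.sum_mul]
  linear_combination -g

/-- The induction step: if `V` decomposes (over the first-jump time) into a first
segment governed by `Wf` and a remainder governed by `R`, `Wf` has broken-chain
representations at every positive length, and `R` has them at every length `< n`,
then `V` has one at length `n`. -/
theorem rep_step (W Wf R V : SeqChannel X Y) (n : ℕ) (hn : 0 < n) (μ : ℝ)
    (hμ0 : 0 ≤ μ) (hμ1 : μ ≤ 1)
    (F : ∀ m : ℕ, 0 < m → RepData W Wf m)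
    (G : ∀ m : ℕ, m < n → RepData W R m)
    (hV : ∀ (xs : List X) (ys : List Y), xs.length = n → ys.length = n →
      V xs ys = (∑ j ∈ Finset.range (n - 1), (1 - μ) ^ j * μ *
          Wf (xs.take (j + 1)) (ys.take (j + 1)) * R (xs.drop (j + 1)) (ys.drop (j + 1))) +
        (1 - μ) ^ (n - 1) * Wf xs ys) :
    Nonempty (RepData W V n) := by
  have hμ1' : (0:ℝ) ≤ 1 - μ := by linarith
  have hjlt : ∀ j : Fin (n - 1), n - ((j : ℕ) + 1) < n := fun j => Nat.sub_lt hn (Nat.succ_pos _)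
  have hjadd : ∀ j : Fin (n - 1), ((j : ℕ) + 1) + (n - ((j : ℕ) + 1)) = n := fun j => by
    have := j.2; omega
  refine ⟨{
    U := (Σ j : Fin (n - 1), ((F ((j : ℕ) + 1) (Nat.succ_pos _)).U × (G (n - ((j : ℕ) + 1)) (hjlt j)).U)) ⊕
      (F n hn).U
    q := Sum.elim
      (fun p => (1 - μ) ^ (p.1 : ℕ) * μ * (F ((p.1 : ℕ) + 1) (Nat.succ_pos _)).q p.2.1 *
        (G (n - ((p.1 : ℕ) + 1)) (hjlt p.1)).q p.2.2)
      (fun v => (1 - μ) ^ (n - 1) * (F n hn).q v)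
    seg := Sum.elim
      (fun p => compJoin (hjadd p.1) ((F ((p.1 : ℕ) + 1) (Nat.succ_pos _)).seg p.2.1)
        ((G (n - ((p.1 : ℕ) + 1)) (hjlt p.1)).seg p.2.2))
      (fun v => (F n hn).seg v)
    q0 := ?_
    qsum := ?_
    eq := ?_ }⟩
  · rintro (⟨j, v, u⟩ | v)
    · exact mul_nonneg (mul_nonneg (mul_nonneg (pow_nonneg hμ1' _) hμ0) ((F _ _).q0 v)) ((G _ _).q0 u)
    · exact mul_nonneg (pow_nonneg hμ1' _) ((F n hn).q0 v)
  · rw [Fintype.sum_sum_type]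
    simp only [Sum.elim_inl, Sum.elim_inr]
    have h2 : ∑ v, (1 - μ) ^ (n - 1) * (F n hn).q v = (1 - μ) ^ (n - 1) := by
      rw [← Finset.mul_sum, (F n hn).qsum, mul_one]
    have h1 : (∑ p : (Σ j : Fin (n - 1), ((F ((j : ℕ) + 1) (Nat.succ_pos _)).U ×
          (G (n - ((j : ℕ) + 1)) (hjlt j)).U)),
          (1 - μ) ^ (p.1 : ℕ) * μ * (F ((p.1 : ℕ) + 1) (Nat.succ_pos _)).q p.2.1 *
            (G (n - ((p.1 : ℕ) + 1)) (hjlt p.1)).q p.2.2) =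
        ∑ j ∈ Finset.range (n - 1), (1 - μ) ^ j * μ := by
      rw [← Finset.univ_sigma_univ, Finset.sum_sigma,
        ← Fin.sum_univ_eq_sum_range (fun j => (1 - μ) ^ j * μ) (n - 1)]
      refine Finset.sum_congr rfl fun j _ => ?_
      rw [Fintype.sum_prod_type]
      have hinner : ∀ v, (∑ u, (1 - μ) ^ (j : ℕ) * μ * (F ((j : ℕ) + 1) (Nat.succ_pos _)).q v *
          (G (n - ((j : ℕ) + 1)) (hjlt j)).q u) =
          (1 - μ) ^ (j : ℕ) * μ * (F ((j : ℕ) + 1) (Nat.succ_pos _)).q v := by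
        intro v
        rw [← Finset.mul_sum, (G (n - ((j : ℕ) + 1)) (hjlt j)).qsum, mul_one]
      rw [Finset.sum_congr rfl fun v _ => hinner v, ← Finset.mul_sum,
        (F ((j : ℕ) + 1) (Nat.succ_pos _)).qsum, mul_one]
    rw [h1, h2]
    exact geom_weights μ (n - 1)
  · intro xs ys hx hy
    rw [hV xs ys hx hy, Fintype.sum_sum_type]
    simp only [Sum.elim_inl, Sum.elim_inr]
    congr 1
    · rw [← Finset.univ_sigma_univ, Finset.sum_sigma,
        ← Fin.sum_univ_eq_sum_range (fun j => (1 - μ) ^ j * μ *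
          Wf (xs.take (j + 1)) (ys.take (j + 1)) * R (xs.drop (j + 1)) (ys.drop (j + 1))) (n - 1)]
      refine Finset.sum_congr rfl fun j _ => ?_
      have hj1 : (j : ℕ) + 1 ≤ n := by have := j.2; omega
      have htx : (xs.take ((j : ℕ) + 1)).length = (j : ℕ) + 1 := by
        rw [List.length_take, hx]; omega
      have hty : (ys.take ((j : ℕ) + 1)).length = (j : ℕ) + 1 := by
        rw [List.length_take, hy]; omega
      have hdx : (xs.drop ((j : ℕ) + 1)).length = n - ((j : ℕ) + 1) := by
        rw [List.length_drop, hx]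
      have hdy : (ys.drop ((j : ℕ) + 1)).length = n - ((j : ℕ) + 1) := by
        rw [List.length_drop, hy]
      rw [(F ((j : ℕ) + 1) (Nat.succ_pos _)).eq _ _ htx hty,
        (G (n - ((j : ℕ) + 1)) (hjlt j)).eq _ _ hdx hdy]
      rw [mul_assoc, Finset.sum_mul_sum, Fintype.sum_prod_type, Finset.mul_sum]
      refine Finset.sum_congr rfl fun v _ => ?_
      rw [Finset.mul_sum]
      refine Finset.sum_congr rfl fun u _ => ?_
      rw [pieceLaw_join W (hjadd j)]
      ring
    · rw [(F n hn).eq xs ys hx hy, Finset.mul_sum]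
      exact Finset.sum_congr rfl fun v _ => by ring

end Aux

/-- Lemma 2: if `c* ∈ D_c` and `c'` is obtained by mixing `c` with `c*`
with parameters `μ₁₂, μ₂₁ ∈ (0,1)`, then `c' ∈ D_c`. -/
theorem mix_mem_degraded_family {S S' X Y : Type*} [Fintype S] [Fintype S']
    [Fintype X] [Fintype Y]
    (c : MarkovChannel S X Y) (cstar : MarkovChannel S' X Y)
    (hP0 : ∀ s t, 0 ≤ c.P s t) (hP1 : ∀ s, ∑ t, c.P s t = 1)
    (hπ0 : ∀ s, 0 ≤ c.π s) (hπ1 : ∑ s, c.π s = 1)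
    (hπstat : ∀ t, ∑ s, c.π s * c.P s t = c.π t)
    (hf0 : ∀ s x y, 0 ≤ c.f s x y) (hf1 : ∀ s x, ∑ y, c.f s x y = 1)
    (hP0' : ∀ s t, 0 ≤ cstar.P s t) (hP1' : ∀ s, ∑ t, cstar.P s t = 1)
    (hπ0' : ∀ s, 0 ≤ cstar.π s) (hπ1' : ∑ s, cstar.π s = 1)
    (hπstat' : ∀ t, ∑ s, cstar.π s * cstar.P s t = cstar.π t)
    (hf0' : ∀ s x y, 0 ≤ cstar.f s x y) (hf1' : ∀ s x, ∑ y, cstar.f s x y = 1)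
    (μ₁₂ μ₂₁ : ℝ) (hμ₁₂ : 0 < μ₁₂) (hμ₁₂' : μ₁₂ < 1) (hμ₂₁ : 0 < μ₂₁) (hμ₂₁' : μ₂₁ < 1)
    (hdeg : BrokenChainDegraded c.law cstar.law) :
    BrokenChainDegraded c.law (c.mix cstar μ₁₂ μ₂₁).law := by
  classical
  set Pm : S ⊕ S' → S ⊕ S' → ℝ := (c.mix cstar μ₁₂ μ₂₁).P with hPm
  set fm : S ⊕ S' → X → Y → ℝ := (c.mix cstar μ₁₂ μ₂₁).f with hfm
  -- extract representation data for `cstar` from `hdeg`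
  have Dstar : ∀ m : ℕ, 0 < m → RepData c.law cstar.law m := by
    intro m _
    have h := hdeg m
    exact Classical.choice (by
      obtain ⟨U, fU, q, seg, h0, h1, he⟩ := h
      exact ⟨@RepData.mk _ _ c.law cstar.law m U fU q seg h0 h1 he⟩)
  -- the two restarted mixed channels
  set MA : SeqChannel X Y := fun xs ys => hmmLaw Pm fm (Sum.elim c.π 0) xs ys with hMA
  set MB : SeqChannel X Y := fun xs ys => hmmLaw Pm fm (Sum.elim 0 cstar.π) xs ys with hMB
  -- jump-row identities for the mixed chain
  have hPA : ∀ s : S, Pm (Sum.inl s) =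
      Sum.elim (fun t => (1 - μ₁₂) * c.P s t) (fun t => μ₁₂ * cstar.π t) := by
    intro s; funext t; cases t <;> rfl
  have hfA : ∀ s : S, fm (Sum.inl s) = c.f s := fun s => rfl
  -- decomposition for MA
  have decA : ∀ (n : ℕ), 0 < n → ∀ (xs : List X) (ys : List Y), xs.length = n → ys.length = n →
      MA xs ys = (∑ j ∈ Finset.range (n - 1), (1 - μ₁₂) ^ j * μ₁₂ *
          c.law (xs.take (j + 1)) (ys.take (j + 1)) * MB (xs.drop (j + 1)) (ys.drop (j + 1))) +
        (1 - μ₁₂) ^ (n - 1) * c.law xs ys := by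
    intro n hn xs ys hx hy
    have hne : xs ≠ [] := by intro h; rw [h] at hx; simp at hx; omega
    have := decomp Pm fm c.P c.f μ₁₂ cstar.π hPA hfA xs ys c.π (by rw [hx, hy]) hne
    rw [hx] at this
    exact this
  -- decomposition for MB, via reindexing along `Sum.comm`
  have decB : ∀ (n : ℕ), 0 < n → ∀ (xs : List X) (ys : List Y), xs.length = n → ys.length = n →
      MB xs ys = (∑ j ∈ Finset.range (n - 1), (1 - μ₂₁) ^ j * μ₂₁ *
          cstar.law (xs.take (j + 1)) (ys.take (j + 1)) * MA (xs.drop (j + 1)) (ys.drop (j + 1))) +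
        (1 - μ₂₁) ^ (n - 1) * cstar.law xs ys := by
    intro n hn xs ys hx hy
    have hne : xs ≠ [] := by intro h; rw [h] at hx; simp at hx; omega
    set e : S' ⊕ S ≃ S ⊕ S' := Equiv.sumComm S' S with he
    set Pm' : S' ⊕ S → S' ⊕ S → ℝ := fun a b => Pm (e a) (e b) with hPm'
    set fm' : S' ⊕ S → X → Y → ℝ := fun a => fm (e a) with hfm'
    have hPB : ∀ s : S', Pm' (Sum.inl s) =
        Sum.elim (fun t => (1 - μ₂₁) * cstar.P s t) (fun t => μ₂₁ * c.π t) := by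
      intro s; funext t; cases t <;> rfl
    have hfB : ∀ s : S', fm' (Sum.inl s) = cstar.f s := fun s => rfl
    have hMBr : ∀ (xs : List X) (ys : List Y),
        hmmLaw Pm' fm' (Sum.elim cstar.π 0) xs ys = MB xs ys := by
      intro xs ys
      have := hmmLaw_reindex e Pm fm (Sum.elim 0 cstar.π) xs ys
      rw [hmmLaw_congr Pm' fm' (Sum.elim cstar.π 0) (fun a => Sum.elim 0 cstar.π (e a))
        (by intro a; cases a <;> rfl)]
      exact this
    have hMAr : ∀ (xs : List X) (ys : List Y),
        hmmLaw Pm' fm' (Sum.elim 0 c.π) xs ys = MA xs ys := by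
      intro xs ys
      have := hmmLaw_reindex e Pm fm (Sum.elim c.π 0) xs ys
      rw [hmmLaw_congr Pm' fm' (Sum.elim 0 c.π) (fun a => Sum.elim c.π 0 (e a))
        (by intro a; cases a <;> rfl)]
      exact this
    have := decomp Pm' fm' cstar.P cstar.f μ₂₁ c.π hPB hfB xs ys cstar.π (by rw [hx, hy]) hne
    rw [hx, hMBr] at this
    rw [this]
    have hdr : ∀ j : ℕ, hmmLaw Pm' fm' (Sum.elim 0 c.π) (List.drop (j + 1) xs)
        (List.drop (j + 1) ys) = MA (List.drop (j + 1) xs) (List.drop (j + 1) ys) :=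
      fun j => hMAr _ _
    simp only [hdr]
    rfl
  -- the main simultaneous induction
  have main : ∀ n : ℕ, Nonempty (RepData c.law MA n) ∧ Nonempty (RepData c.law MB n) := by
    intro n
    induction n using Nat.strong_induction_on with
    | _ n ih =>
      rcases Nat.eq_zero_or_pos n with rfl | hn
      · exact ⟨⟨zeroRep c.law MA rfl⟩, ⟨zeroRep c.law MB rfl⟩⟩
      constructor
      · exact rep_step c.law c.law MB MA n hn μ₁₂ hμ₁₂.le hμ₁₂'.le
          (fun m hm => trivRep c.law m hm)
          (fun m hm => Classical.choice (ih m hm).2)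
          (decA n hn)
      · exact rep_step c.law cstar.law MA MB n hn μ₂₁ hμ₂₁.le hμ₂₁'.le
          (fun m hm => Dstar m hm)
          (fun m hm => Classical.choice (ih m hm).1)
          (decB n hn)
  -- assemble the final representation
  intro n
  rcases Nat.eq_zero_or_pos n with rfl | hn
  · obtain ⟨D⟩ := (main 0).1
    refine ⟨Unit, inferInstance, fun _ => 1, fun _ => Composition.ones 0, fun _ => zero_le_one,
      by simp, ?_⟩
    intro xs ys hx hy
    rw [List.length_eq_zero_iff] at hx hy
    subst hx; subst hy
    simp [pieceLaw_zero]
    rfl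
  · obtain ⟨DA⟩ := (main n).1
    obtain ⟨DB⟩ := (main n).2
    set α : ℝ := μ₂₁ / (μ₁₂ + μ₂₁) with hα
    have hsum : (0:ℝ) < μ₁₂ + μ₂₁ := by linarith
    have hα0 : 0 ≤ α := le_of_lt (div_pos hμ₂₁ hsum)
    have hα1 : α ≤ 1 := by
      rw [hα, div_le_one hsum]; linarith
    -- linearity of the mixed law in the initial distribution
    have hmix : ∀ (xs : List X) (ys : List Y), xs ≠ [] →
        (c.mix cstar μ₁₂ μ₂₁).law xs ys = α * MA xs ys + (1 - α) * MB xs ys := by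
      intro xs ys hne
      show hmmLaw Pm fm (c.mix cstar μ₁₂ μ₂₁).π xs ys = _
      rw [hmmLaw_congr Pm fm (c.mix cstar μ₁₂ μ₂₁).π
        (fun u => (fun u => α * Sum.elim c.π (0 : S' → ℝ) u) u +
          (fun u => (1 - α) * Sum.elim (0 : S → ℝ) cstar.π u) u)
        (by intro u; cases u <;> simp [MarkovChannel.mix, hα] <;> ring)]
      rw [hmmLaw_add Pm fm _ _ _ _ hne, hmmLaw_smul Pm fm _ _ _ _ hne,
        hmmLaw_smul Pm fm _ _ _ _ hne]
    refine ⟨DA.U ⊕ DB.U, inferInstance,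
      Sum.elim (fun u => α * DA.q u) (fun u => (1 - α) * DB.q u),
      Sum.elim DA.seg DB.seg, ?_, ?_, ?_⟩
    · rintro (u | u)
      · exact mul_nonneg hα0 (DA.q0 u)
      · exact mul_nonneg (by linarith) (DB.q0 u)
    · rw [Fintype.sum_sum_type]
      simp only [Sum.elim_inl, Sum.elim_inr]
      rw [← Finset.mul_sum, ← Finset.mul_sum, DA.qsum, DB.qsum]
      ring
    · intro xs ys hx hy
      have hne : xs ≠ [] := by intro h; rw [h] at hx; simp at hx; omega
      rw [hmix xs ys hne, DA.eq xs ys hx hy, DB.eq xs ys hx hy, Fintype.sum_sum_type]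
      simp only [Sum.elim_inl, Sum.elim_inr]
      rw [Finset.mul_sum, Finset.mul_sum]
      congr 1 <;> exact Finset.sum_congr rfl fun u _ => by ring
end
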